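/- Fix ω₁, ω₂ ∈ ℂ∖{0} with Im(ω₁/ω₂) > 0, set q = exp(πiω₁/ω₂), q̃ = exp(πiω₂/ω₁), let g > 0 be a real number and write g^w := exp(w·ln g) for w ∈ ℂ. Let 𝒮(z) = (∏_{m=0}^∞ (1 − q^{2m}·e^{2πiz/ω₂})) / (∏_{m=1}^∞ (1 − q̃^{−2m}·e^{2πiz/ω₁})), and define the Whittaker vector Φ⁰(t) = 𝒮(−it + ω₁ + ω₂ − (iω₁ω₂/(2π))·ln g). Then for every t ∈ ℂ at which the denominators of the defining products of 𝒮 at the three arguments involved are nonvanishing, Φ⁰ satisfies the pair of dual difference equations: Φ⁰(t − iω₁) = (1 − g^{ω₁}·e^{2πt/ω₂})·Φ⁰(t) and Φ⁰(t − iω₂) = (1 − g^{ω₂}·e^{2πt/ω₁})·Φ⁰(t). -/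

import Mathlib

open Complex Filter

lemma aux_multipliable (a r : ℂ) (hr : ‖r‖ < 1) :
    Multipliable (fun m : ℕ => 1 - a * r ^ m) := by
  by_cases h : ∀ m : ℕ, 1 - a * r ^ m ≠ 0
  · refine Complex.multipliable_of_summable_log (f := fun m => 1 - a * r ^ m) ?_
    have hto : Filter.Tendsto (fun m : ℕ => ‖a * r ^ m‖) Filter.atTop (nhds 0) := by
      have h1 := ((tendsto_pow_atTop_nhds_zero_of_norm_lt_one hr).const_mul a).norm
      simpa using h1
    have hev : ∀ᶠ m in Filter.atTop,
        ‖Complex.log (1 - a * r ^ m)‖ ≤ 3/2 * (‖a‖ * ‖r‖ ^ m) := by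
      filter_upwards [hto.eventually_le_const (by norm_num : (0:ℝ) < 1/2)] with m hm
      have h2 : ‖-(a * r ^ m)‖ ≤ 1/2 := by simpa using hm
      have h3 := Complex.norm_log_one_add_half_le_self h2
      rw [show (1 : ℂ) + -(a * r ^ m) = 1 - a * r ^ m by ring] at h3
      calc ‖Complex.log (1 - a * r ^ m)‖ ≤ 3/2 * ‖-(a * r ^ m)‖ := h3
        _ = 3/2 * (‖a‖ * ‖r‖ ^ m) := by rw [norm_neg, norm_mul, norm_pow]
    refine Summable.of_norm_bounded_eventually_nat ?_ hev
    exact (((summable_geometric_of_lt_one (norm_nonneg r) hr).mul_left ‖a‖).mul_left (3/2))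
  · push_neg at h
    obtain ⟨k, hk⟩ := h
    refine ⟨0, ?_⟩
    have hev : (fun s : Finset ℕ => ∏ i ∈ s, (1 - a * r ^ i)) =ᶠ[Filter.atTop]
        (fun _ => (0 : ℂ)) := by
      filter_upwards [Filter.eventually_ge_atTop ({k} : Finset ℕ)] with s hs
      exact Finset.prod_eq_zero (Finset.singleton_subset_iff.mp hs) hk
    exact Filter.Tendsto.congr' hev.symm tendsto_const_nhds

set_option maxHeartbeats 1000000 in
lemma aux_split (a r : ℂ) (hr : ‖r‖ < 1) :
    ∏' m : ℕ, (1 - a * r ^ m) = (1 - a) * ∏' m : ℕ, (1 - a * r * r ^ m) := by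
  have hm : Multipliable (fun n : ℕ => 1 - a * r ^ (n + 1)) :=
    (aux_multipliable (a * r) r hr).congr fun n => by rw [pow_succ]; ring
  rw [tprod_eq_zero_mul' hm]
  have h0 : (1 : ℂ) - a * r ^ 0 = 1 - a := by simp
  rw [h0]
  congr 1
  exact tprod_congr fun m => by rw [pow_succ]; ring



/-- `qparam ω₁ ω₂ = exp(πi·ω₁/ω₂)`; then `q = qparam ω₁ ω₂` and
`q̃ = qparam ω₂ ω₁`. -/
noncomputable def qparam (ω₁ ω₂ : ℂ) : ℂ :=
  Complex.exp ((Real.pi : ℂ) * Complex.I * ω₁ / ω₂)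

/-- The function `𝒮(z) = ∏_{m≥0}(1 − q^{2m}·e^{2πiz/ω₂}) / ∏_{m≥1}(1 − q̃^{−2m}·e^{2πiz/ω₁})`. -/
noncomputable def Sfun (ω₁ ω₂ z : ℂ) : ℂ :=
  (∏' m : ℕ, (1 - qparam ω₁ ω₂ ^ (2 * m) *
      Complex.exp (2 * (Real.pi : ℂ) * Complex.I * z / ω₂))) /
  (∏' m : ℕ, (1 - qparam ω₂ ω₁ ^ (-(2 * ((m : ℤ) + 1))) *
      Complex.exp (2 * (Real.pi : ℂ) * Complex.I * z / ω₁)))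

/-- The argument of `𝒮` in the Whittaker vector `Φ⁰`:
`−it + ω₁ + ω₂ − (iω₁ω₂/(2π))·ln g`. -/
noncomputable def phi0Arg (ω₁ ω₂ : ℂ) (g : ℝ) (t : ℂ) : ℂ :=
  -(Complex.I * t) + ω₁ + ω₂
    - Complex.I * ω₁ * ω₂ / (2 * (Real.pi : ℂ)) * (Real.log g : ℂ)

/-- The Whittaker vector `Φ⁰(t) = 𝒮(−it + ω₁ + ω₂ − (iω₁ω₂/(2π))·ln g)`. -/
noncomputable def Phi0 (ω₁ ω₂ : ℂ) (g : ℝ) (t : ℂ) : ℂ :=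
  Sfun ω₁ ω₂ (phi0Arg ω₁ ω₂ g t)

/-- The denominator factors of `𝒮` are nonvanishing at `z`. -/
def SdenNeZero (ω₁ ω₂ z : ℂ) : Prop :=
  ∀ m : ℕ, 1 ≤ m →
    1 - qparam ω₂ ω₁ ^ (-(2 * (m : ℤ))) *
      Complex.exp (2 * (Real.pi : ℂ) * Complex.I * z / ω₁) ≠ 0

/-- The Whittaker vector `Φ⁰` satisfies the pair of dual difference equations
`Φ⁰(t − iω₁) = (1 − g^{ω₁}·e^{2πt/ω₂})·Φ⁰(t)` and
`Φ⁰(t − iω₂) = (1 − g^{ω₂}·e^{2πt/ω₁})·Φ⁰(t)`. -/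
theorem whittaker_vector_Phi0_difference_equations
    (ω₁ ω₂ : ℂ) (hω₁ : ω₁ ≠ 0) (hω₂ : ω₂ ≠ 0) (him : 0 < (ω₁ / ω₂).im)
    (g : ℝ) (hg : 0 < g) (t : ℂ)
    (h1 : SdenNeZero ω₁ ω₂ (phi0Arg ω₁ ω₂ g t))
    (h2 : SdenNeZero ω₁ ω₂ (phi0Arg ω₁ ω₂ g t - ω₁))
    (h3 : SdenNeZero ω₁ ω₂ (phi0Arg ω₁ ω₂ g t - ω₂)) :
    Phi0 ω₁ ω₂ g (t - Complex.I * ω₁)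
        = (1 - Complex.exp (ω₁ * (Real.log g : ℂ)) *
            Complex.exp (2 * (Real.pi : ℂ) * t / ω₂)) * Phi0 ω₁ ω₂ g t ∧
    Phi0 ω₁ ω₂ g (t - Complex.I * ω₂)
        = (1 - Complex.exp (ω₂ * (Real.log g : ℂ)) *
            Complex.exp (2 * (Real.pi : ℂ) * t / ω₁)) * Phi0 ω₁ ω₂ g t := by
  have hπ : (Real.pi : ℂ) ≠ 0 := Complex.ofReal_ne_zero.mpr Real.pi_ne_zero
  set z : ℂ := phi0Arg ω₁ ω₂ g t with hzdef
  set Q : ℂ := Complex.exp (2 * (Real.pi : ℂ) * Complex.I * ω₁ / ω₂) with hQ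
  set R : ℂ := Complex.exp (-(2 * (Real.pi : ℂ) * Complex.I * ω₂ / ω₁)) with hR
  have hQn : ‖Q‖ < 1 := by
    rw [hQ, Complex.norm_exp, Real.exp_lt_one_iff]
    have hre : (2 * (Real.pi : ℂ) * Complex.I * ω₁ / ω₂).re
        = -(2 * Real.pi * (ω₁ / ω₂).im) := by
      rw [show 2 * (Real.pi : ℂ) * Complex.I * ω₁ / ω₂
          = (2 * (Real.pi : ℂ)) * (Complex.I * (ω₁ / ω₂)) by ring]
      simp [Complex.mul_re, Complex.mul_im]
    rw [hre]
    have hpi := Real.pi_pos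
    nlinarith [him]
  have himinv : (ω₂ / ω₁).im < 0 := by
    rw [← inv_div ω₁ ω₂, Complex.inv_im]
    exact div_neg_of_neg_of_pos (by linarith) (Complex.normSq_pos.mpr (div_ne_zero hω₁ hω₂))
  have hRn : ‖R‖ < 1 := by
    rw [hR, Complex.norm_exp, Real.exp_lt_one_iff]
    have hre : (-(2 * (Real.pi : ℂ) * Complex.I * ω₂ / ω₁)).re
        = 2 * Real.pi * (ω₂ / ω₁).im := by
      rw [show -(2 * (Real.pi : ℂ) * Complex.I * ω₂ / ω₁)
          = (2 * (Real.pi : ℂ)) * (Complex.I * (-(ω₂ / ω₁))) by ring]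
      simp [Complex.mul_re, Complex.mul_im]
    rw [hre]
    have hpi := Real.pi_pos
    nlinarith [himinv]
  have hq1 : ∀ m : ℕ, qparam ω₁ ω₂ ^ (2 * m) = Q ^ m := by
    intro m
    rw [qparam, hQ, ← Complex.exp_nat_mul, ← Complex.exp_nat_mul]
    congr 1
    push_cast
    ring
  have hq2 : ∀ m : ℕ, qparam ω₂ ω₁ ^ (-(2 * ((m : ℤ) + 1))) = R ^ (m + 1) := by
    intro m
    rw [qparam, hR, ← Complex.exp_int_mul, ← Complex.exp_nat_mul]
    congr 1
    push_cast
    ring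
  have hSfun : ∀ w : ℂ, Sfun ω₁ ω₂ w
      = (∏' m : ℕ, (1 - Complex.exp (2 * (Real.pi : ℂ) * Complex.I * w / ω₂) * Q ^ m)) /
        (∏' m : ℕ, (1 - R * Complex.exp (2 * (Real.pi : ℂ) * Complex.I * w / ω₁) * R ^ m)) := by
    intro w
    rw [Sfun]
    congr 1
    · exact tprod_congr fun m => by rw [hq1 m, mul_comm]
    · exact tprod_congr fun m => by rw [hq2 m]; ring
  have hAQ : Complex.exp (2 * (Real.pi : ℂ) * Complex.I * (z - ω₁) / ω₂) * Q
      = Complex.exp (2 * (Real.pi : ℂ) * Complex.I * z / ω₂) := by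
    rw [hQ, ← Complex.exp_add]
    congr 1
    field_simp
    ring
  have hBshift : Complex.exp (2 * (Real.pi : ℂ) * Complex.I * (z - ω₁) / ω₁)
      = Complex.exp (2 * (Real.pi : ℂ) * Complex.I * z / ω₁) := by
    rw [show 2 * (Real.pi : ℂ) * Complex.I * (z - ω₁) / ω₁
        = 2 * (Real.pi : ℂ) * Complex.I * z / ω₁ - 2 * (Real.pi : ℂ) * Complex.I by
      field_simp]
    rw [Complex.exp_sub, Complex.exp_two_pi_mul_I, div_one]
  have hAshift : Complex.exp (2 * (Real.pi : ℂ) * Complex.I * (z - ω₂) / ω₂)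
      = Complex.exp (2 * (Real.pi : ℂ) * Complex.I * z / ω₂) := by
    rw [show 2 * (Real.pi : ℂ) * Complex.I * (z - ω₂) / ω₂
        = 2 * (Real.pi : ℂ) * Complex.I * z / ω₂ - 2 * (Real.pi : ℂ) * Complex.I by
      field_simp]
    rw [Complex.exp_sub, Complex.exp_two_pi_mul_I, div_one]
  have hBR : Complex.exp (2 * (Real.pi : ℂ) * Complex.I * (z - ω₂) / ω₁)
      = R * Complex.exp (2 * (Real.pi : ℂ) * Complex.I * z / ω₁) := by
    rw [hR, ← Complex.exp_add]
    congr 1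
    field_simp
    ring
  have hA1 : Complex.exp (2 * (Real.pi : ℂ) * Complex.I * (z - ω₁) / ω₂)
      = Complex.exp (ω₁ * (Real.log g : ℂ)) * Complex.exp (2 * (Real.pi : ℂ) * t / ω₂) := by
    have harg : 2 * (Real.pi : ℂ) * Complex.I * (z - ω₁) / ω₂
        = ω₁ * (Real.log g : ℂ) + 2 * (Real.pi : ℂ) * t / ω₂ + 2 * (Real.pi : ℂ) * Complex.I := by
      rw [hzdef]
      simp only [phi0Arg]
      field_simp
      linear_combination (-(2 * (Real.pi : ℂ) * t)
        - ω₁ * ω₂ * (Real.log g : ℂ)) * Complex.I_sq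
    rw [harg, Complex.exp_add, Complex.exp_add, Complex.exp_two_pi_mul_I, mul_one]
  have hB1 : R * Complex.exp (2 * (Real.pi : ℂ) * Complex.I * z / ω₁)
      = Complex.exp (ω₂ * (Real.log g : ℂ)) * Complex.exp (2 * (Real.pi : ℂ) * t / ω₁) := by
    rw [hR, ← Complex.exp_add]
    have harg : -(2 * (Real.pi : ℂ) * Complex.I * ω₂ / ω₁)
          + 2 * (Real.pi : ℂ) * Complex.I * z / ω₁
        = ω₂ * (Real.log g : ℂ) + 2 * (Real.pi : ℂ) * t / ω₁ + 2 * (Real.pi : ℂ) * Complex.I := by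
      rw [hzdef]
      simp only [phi0Arg]
      field_simp
      linear_combination (-(2 * (Real.pi : ℂ) * t)
        - ω₂ * ω₁ * (Real.log g : ℂ)) * Complex.I_sq
    rw [harg, Complex.exp_add, Complex.exp_add, Complex.exp_two_pi_mul_I, mul_one]
  have hz1 : phi0Arg ω₁ ω₂ g (t - Complex.I * ω₁) = z - ω₁ := by
    rw [hzdef]
    simp only [phi0Arg]
    linear_combination ω₁ * Complex.I_sq
  have hz2 : phi0Arg ω₁ ω₂ g (t - Complex.I * ω₂) = z - ω₂ := by
    rw [hzdef]
    simp only [phi0Arg]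
    linear_combination ω₂ * Complex.I_sq
  have hc : 1 - R * Complex.exp (2 * (Real.pi : ℂ) * Complex.I * z / ω₁) ≠ 0 := by
    have h := h1 1 le_rfl
    have hrw : qparam ω₂ ω₁ ^ (-(2 * ((1 : ℕ) : ℤ))) = R := by
      rw [qparam, hR, ← Complex.exp_int_mul]
      congr 1
      push_cast
      ring
    rwa [hrw] at h
  constructor
  · rw [Phi0, Phi0, hz1, ← hzdef, hSfun, hSfun, hBshift,
      aux_split (Complex.exp (2 * (Real.pi : ℂ) * Complex.I * (z - ω₁) / ω₂)) Q hQn,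
      hAQ, hA1, mul_div_assoc]
  · rw [Phi0, Phi0, hz2, ← hzdef, hSfun, hSfun, hAshift, hBR]
    have hcongr : (∏' m : ℕ, ((1 : ℂ)
          - R * (R * Complex.exp (2 * (Real.pi : ℂ) * Complex.I * z / ω₁)) * R ^ m))
        = ∏' m : ℕ, ((1 : ℂ)
          - R * Complex.exp (2 * (Real.pi : ℂ) * Complex.I * z / ω₁) * R * R ^ m) :=
      tprod_congr fun m => by ring
    rw [hcongr]
    have hD : (∏' m : ℕ, ((1 : ℂ)
          - R * Complex.exp (2 * (Real.pi : ℂ) * Complex.I * z / ω₁) * R * R ^ m))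
        = (∏' m : ℕ, ((1 : ℂ)
          - R * Complex.exp (2 * (Real.pi : ℂ) * Complex.I * z / ω₁) * R ^ m))
          / (1 - R * Complex.exp (2 * (Real.pi : ℂ) * Complex.I * z / ω₁)) := by
      rw [aux_split (R * Complex.exp (2 * (Real.pi : ℂ) * Complex.I * z / ω₁)) R hRn,
        mul_div_cancel_left₀ _ hc]
    rw [hD, div_div_eq_mul_div, hB1]
    ring
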